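/- With two states and n agents where agents 1,…,n−1 share belief p and agent n has belief p_n with 0 < p < p_n < 1/n, the equal-wealth parimutuel equilibrium price of state 1 is p_n; hence the parimutuel price rule violates No Veto Power. -/
import Mathlib

set_option maxHeartbeats 1000000


/-- with two states and `n` agents where all agents except `i0`
share the belief `bp` and agent `i0` has belief `pn` with `0 < bp < pn < 1/n`,
any equal-wealth parimutuel equilibrium price of state 1 equals `pn`, and in
particular differs from `bp`: the parimutuel rule violates No Veto Power. -/
theorem stmt18 {n : ℕ} (hn : 2 ≤ n)
    (b : Fin n → ℝ) (i0 : Fin n) (bp pn : ℝ)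
    (hb : ∀ j, j ≠ i0 → b j = bp) (hbi : b i0 = pn)
    (hbp : 0 < bp) (hlt : bp < pn) (hup : pn < 1 / n)
    (ρ : ℝ) (hρ : ρ ∈ Set.Icc (0:ℝ) 1)
    (x1 x2 : Fin n → ℝ) (hx1 : ∀ i, 0 ≤ x1 i) (hx2 : ∀ i, 0 ≤ x2 i)
    (hclear1 : ∑ i, x1 i = 1) (hclear2 : ∑ i, x2 i = 1)
    (hopt : ∀ i, ∀ y1 y2 : ℝ, 0 ≤ y1 → 0 ≤ y2 → ρ * y1 + (1 - ρ) * y2 ≤ 1 / n →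
      b i * y1 + (1 - b i) * y2 ≤ b i * x1 i + (1 - b i) * x2 i) :
    ρ = pn ∧ ρ ≠ bp := by
  have hn' : (2:ℝ) ≤ n := by exact_mod_cast hn
  have hn0 : (0:ℝ) < n := by linarith
  have hpn0 : 0 < pn := hbp.trans hlt
  have hhalf : (1:ℝ)/n ≤ 1/2 := by
    apply one_div_le_one_div_of_le <;> linarith
  have hpn1 : pn < 1 := by linarith
  have hnpn : (n:ℝ) * pn < 1 := by
    rw [lt_div_iff₀ hn0] at hup; linarith
  have hbval : ∀ i, 0 < b i ∧ b i ≤ pn := by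
    intro i
    by_cases h : i = i0
    · rw [h, hbi]; exact ⟨hpn0, le_rfl⟩
    · rw [hb i h]; exact ⟨hbp, hlt.le⟩
  -- ρ > 0
  have hρ0 : 0 < ρ := by
    rcases hρ.1.lt_or_eq with h | h
    · exact h
    exfalso
    set Y := (pn * x1 i0 + (1 - pn) * x2 i0 + 1) / pn with hY
    have hY0 : 0 ≤ Y := by
      apply div_nonneg _ hpn0.le
      nlinarith [hx1 i0, hx2 i0]
    have hcon : ρ * Y + (1 - ρ) * 0 ≤ 1 / n := by
      rw [← h]; rw [mul_zero, add_zero, zero_mul]; positivity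
    have hv := hopt i0 Y 0 hY0 le_rfl hcon
    rw [hbi, mul_zero, add_zero] at hv
    rw [hY, mul_div_cancel₀ _ hpn0.ne'] at hv
    linarith
  -- ρ < 1
  have hρ1 : ρ < 1 := by
    rcases hρ.2.lt_or_eq with h | h
    · exact h
    exfalso
    set Y := (pn * x1 i0 + (1 - pn) * x2 i0 + 1) / (1 - pn) with hY
    have hY0 : 0 ≤ Y := by
      apply div_nonneg _ (by linarith)
      nlinarith [hx1 i0, hx2 i0]
    have hcon : ρ * 0 + (1 - ρ) * Y ≤ 1 / n := by
      rw [h]; rw [mul_zero, sub_self, zero_add, zero_mul]; positivity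
    have hv := hopt i0 0 Y le_rfl hY0 hcon
    rw [hbi, mul_zero, zero_add] at hv
    rw [hY, mul_div_cancel₀ _ (by linarith : (1:ℝ) - pn ≠ 0)] at hv
    linarith
  -- every agent's expenditure is at least 1/n
  have hc_ge : ∀ i, 1/(n:ℝ) ≤ ρ * x1 i + (1 - ρ) * x2 i := by
    intro i
    obtain ⟨hb0, hbpn⟩ := hbval i
    have hb1 : b i < 1 := lt_of_le_of_lt hbpn hpn1
    rcases le_total ρ (b i) with h | h
    · -- buy state 1
      have hpos : (0:ℝ) < n * ρ := by positivity
      have hcon : ρ * (1/(n*ρ)) + (1 - ρ) * 0 ≤ 1 / n := by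
        rw [mul_zero, add_zero, mul_one_div]
        rw [div_le_div_iff₀ hpos hn0]
        ring_nf
        nlinarith
      have hv := hopt i (1/(n*ρ)) 0 (by positivity) le_rfl hcon
      rw [mul_zero, add_zero, mul_one_div, div_le_iff₀ hpos] at hv
      rw [div_le_iff₀ hn0]
      nlinarith [mul_nonneg (sub_nonneg.mpr h) (hx2 i), hx1 i, hx2 i]
    · -- buy state 2
      have hpos : (0:ℝ) < n * (1 - ρ) := mul_pos hn0 (by linarith)
      have hcon : ρ * 0 + (1 - ρ) * (1/(n*(1-ρ))) ≤ 1 / n := by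
        rw [mul_zero, zero_add, mul_one_div]
        rw [div_le_div_iff₀ hpos hn0]
        ring_nf
        nlinarith
      have hv := hopt i 0 (1/(n*(1-ρ))) le_rfl (one_div_nonneg.mpr hpos.le) hcon
      rw [mul_zero, zero_add, mul_one_div, div_le_iff₀ hpos] at hv
      rw [div_le_iff₀ hn0]
      nlinarith [mul_nonneg (sub_nonneg.mpr h) (hx1 i), hx1 i, hx2 i]
  have hc_sum : ∑ i, (ρ * x1 i + (1 - ρ) * x2 i) = 1 := by
    rw [Finset.sum_add_distrib, ← Finset.mul_sum, ← Finset.mul_sum, hclear1, hclear2]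
    ring
  have hconst : ∑ _i : Fin n, (1/(n:ℝ)) = 1 := by
    rw [Finset.sum_const, Finset.card_univ, Fintype.card_fin, nsmul_eq_mul]
    field_simp
  have hc_eq : ∀ i, ρ * x1 i + (1 - ρ) * x2 i = 1/(n:ℝ) := by
    have := (Finset.sum_eq_sum_iff_of_le (fun i _ => hc_ge i)).mp
      (by rw [hc_sum, hconst])
    intro i
    exact (this i (Finset.mem_univ i)).symm
  -- now trichotomy
  rcases lt_trichotomy ρ pn with h | h | h
  · exfalso
    have hpos : (0:ℝ) < n * ρ := by positivity
    have hcon : ρ * (1/(n*ρ)) + (1 - ρ) * 0 ≤ 1 / n := by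
      rw [mul_zero, add_zero, mul_one_div]
      rw [div_le_div_iff₀ hpos hn0]
      ring_nf
      nlinarith
    have hv := hopt i0 (1/(n*ρ)) 0 (by positivity) le_rfl hcon
    rw [hbi, mul_zero, add_zero, mul_one_div, div_le_iff₀ hpos] at hv
    have hc := hc_eq i0
    have hx1le : x1 i0 ≤ 1 := by
      calc x1 i0 ≤ ∑ i, x1 i := Finset.single_le_sum (fun i _ => hx1 i) (Finset.mem_univ i0)
      _ = 1 := hclear1
    -- x2 i0 must be 0
    have hx2z : x2 i0 = 0 := by
      have hcn : ρ * x1 i0 + (1 - ρ) * x2 i0 = 1/(n:ℝ) := hc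
      rw [eq_div_iff hn0.ne'] at hcn
      have e1 : pn * ((ρ * x1 i0 + (1 - ρ) * x2 i0) * n) = pn := by rw [hcn, mul_one]
      have e2 : (↑n * x2 i0) * (pn - ρ) ≤ 0 := by nlinarith [hv, e1]
      nlinarith [e2, mul_pos hn0 (sub_pos.mpr h), hx2 i0]
    rw [hx2z, mul_zero, add_zero, eq_div_iff hn0.ne'] at hc
    nlinarith [mul_nonneg (by linarith : (0:ℝ) ≤ 1 - x1 i0) (mul_pos hn0 hρ0).le,
      mul_pos hn0 (sub_pos.mpr h)]
  · exact ⟨h, by rw [h]; exact hlt.ne'⟩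
  · exfalso
    have hx1z : ∀ i, x1 i = 0 := by
      intro i
      obtain ⟨hb0, hbpn⟩ := hbval i
      have hbρ : b i < ρ := lt_of_le_of_lt hbpn h
      have hpos : (0:ℝ) < n * (1 - ρ) := mul_pos hn0 (by linarith)
      have hcon : ρ * 0 + (1 - ρ) * (1/(n*(1-ρ))) ≤ 1 / n := by
        rw [mul_zero, zero_add, mul_one_div]
        rw [div_le_div_iff₀ hpos hn0]
        ring_nf
        nlinarith
      have hv := hopt i 0 (1/(n*(1-ρ))) le_rfl (one_div_nonneg.mpr hpos.le) hcon
      rw [mul_zero, zero_add, mul_one_div, div_le_iff₀ hpos] at hv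
      have hc := hc_eq i
      rw [eq_div_iff hn0.ne'] at hc
      have e1 : (1 - b i) * ((ρ * x1 i + (1 - ρ) * x2 i) * n) = 1 - b i := by rw [hc, mul_one]
      have e2 : (↑n * x1 i) * (ρ - b i) ≤ 0 := by nlinarith [hv, e1]
      nlinarith [e2, mul_pos hn0 (sub_pos.mpr hbρ), hx1 i]
    have : (1:ℝ) = 0 := by
      rw [← hclear1, Finset.sum_eq_zero (fun i _ => hx1z i)]
    norm_num at this
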